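/- The linear span of nonempty planar forests, equipped with concatenation m and the root-grafting product ↘, is generated as an algebra over the operations {m, ↘} by the single-vertex tree •: every planar forest of weight n lies in the span of all n-ary operations built from m and ↘ applied to n copies of •. -/
import Mathlib


/-- Planar rooted trees; `PTree.node []` is the single-vertex tree `•`. -/
inductive PTree : Type
  | node : List PTree → PTree

/-- Planar rooted forests; the product `m` is concatenation (list append). -/
abbrev Forest : Type := List PTree

/-- Grafting on the root: `F ↘ G` grafts `F` on the left of the root of the first tree
of `G`; in particular `B⁺(F) = F ↘ •`. -/
def graftRoot (F : Forest) : Forest → Forest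
  | [] => F
  | .node c :: rest => .node (F ++ c) :: rest

/-- Nonempty planar forests are generated from the single-vertex tree `•` by the two
operations `m` (concatenation) and `↘` (root grafting): every set of forests containing
`•` and closed under these operations contains all nonempty planar forests. -/
theorem forests_generated_by_m_and_graftRoot (S : Set Forest)
    (hone : [PTree.node []] ∈ S)
    (hm : ∀ x ∈ S, ∀ y ∈ S, x ++ y ∈ S)
    (hg : ∀ x ∈ S, ∀ y ∈ S, graftRoot x y ∈ S) :
    ∀ F : Forest, F ≠ [] → F ∈ S := by
  have key : ∀ n (F : Forest), sizeOf F ≤ n → F ≠ [] → F ∈ S := by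
    intro n
    induction n with
    | zero => intro F hF hne; exfalso; cases F <;> simp at hF
    | succ n ih =>
      intro F hF hne
      match F with
      | [PTree.node []] => exact hone
      | [PTree.node (c :: cs)] =>
          have h1 : (c :: cs : Forest) ∈ S := by
            apply ih
            · simp at hF ⊢; omega
            · simp
          have := hg _ h1 _ hone
          simpa [graftRoot] using this
      | t :: s :: r =>
          have hs : 1 ≤ sizeOf s := by cases s; simp
          have hr : 1 ≤ sizeOf r := by cases r <;> simp <;> omega
          have h1 : ([t] : Forest) ∈ S := by
            apply ih
            · simp at hF ⊢; omega
            · simp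
          have h2 : (s :: r : Forest) ∈ S := by
            apply ih
            · simp at hF ⊢; omega
            · simp
          simpa using hm _ h1 _ h2
  intro F hne
  exact key (sizeOf F) F le_rfl hne
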